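/- arXiv:2407.13624 — 7 statements merged into one kernel-verified Lean document; each statement's English description precedes it below -/
import Mathlib

section
/- Let G be a group acting on a group H by automorphisms. Then the abelianization of the semidirect product G ⋉ H is isomorphic to G^ab × (H^ab)_G, where (H^ab)_G is the quotient of H^ab by the subgroup generated by all elements of the form (g • h) * h⁻¹ with g ∈ G and h ∈ H^ab (with the induced action). -/
/-- For a group `G` acting on a group `H`, the abelianization of the
semidirect product `G ⋉ H` is isomorphic to `G^ab × (H^ab)_G`, where `(H^ab)_G` is the
quotient of `H^ab` by the subgroup generated by the elements `(g • h) * h⁻¹`. -/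
theorem semidirect_abelianization (G H : Type*) [Group G] [Group H] (φ : G →* MulAut H) :
    Nonempty (Abelianization (H ⋊[φ] G) ≃*
      Abelianization G ×
        (Abelianization H ⧸ Subgroup.closure
          {a : Abelianization H | ∃ (g : G) (h : Abelianization H),
            a = Abelianization.map (φ g).toMonoidHom h * h⁻¹})) := by
  classical
  set N : Subgroup (Abelianization H) := Subgroup.closure
      {a : Abelianization H | ∃ (g : G) (h : Abelianization H),
        a = Abelianization.map (φ g).toMonoidHom h * h⁻¹} with hN
  have key : ∀ (g : G) (h : Abelianization H),
      (QuotientGroup.mk (Abelianization.map (φ g).toMonoidHom h) : Abelianization H ⧸ N)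
        = QuotientGroup.mk h := by
    intro g h
    rw [QuotientGroup.eq]
    have h1 : Abelianization.map (φ g).toMonoidHom h * h⁻¹ ∈ N :=
      Subgroup.subset_closure ⟨g, h, rfl⟩
    have h2 := N.inv_mem h1
    simpa [mul_inv_rev, mul_comm] using h2
  -- forward map
  let fwd0 : H ⋊[φ] G →* Abelianization G × (Abelianization H ⧸ N) :=
    MonoidHom.mk' (fun x => (Abelianization.of x.right,
        QuotientGroup.mk (Abelianization.of x.left))) (by
      intro a b
      refine Prod.ext ?_ ?_
      · simp [SemidirectProduct.mul_right, map_mul]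
      · show (QuotientGroup.mk (Abelianization.of ((a * b).left)) :
            Abelianization H ⧸ N) = _
        rw [SemidirectProduct.mul_left, map_mul, QuotientGroup.mk_mul]
        congr 1
        have : Abelianization.of ((φ a.right) b.left)
            = Abelianization.map (φ a.right).toMonoidHom (Abelianization.of b.left) := by
          simp [Abelianization.map_of]
        rw [this, key])
  let fwd : Abelianization (H ⋊[φ] G) →* Abelianization G × (Abelianization H ⧸ N) :=
    Abelianization.lift fwd0
  -- backward map
  let fG : Abelianization G →* Abelianization (H ⋊[φ] G) :=
    Abelianization.lift (Abelianization.of.comp (SemidirectProduct.inr))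
  let fH : Abelianization H →* Abelianization (H ⋊[φ] G) :=
    Abelianization.lift (Abelianization.of.comp (SemidirectProduct.inl))
  have hker : N ≤ fH.ker := by
    rw [hN, Subgroup.closure_le]
    rintro _ ⟨g, h, rfl⟩
    induction h using QuotientGroup.induction_on with
    | _ h =>
      simp only [SetLike.mem_coe, MonoidHom.mem_ker, map_mul, map_inv,
        Abelianization.map_of]
      have : fH (Abelianization.of ((φ g) h)) = fH (Abelianization.of h) := by
        show Abelianization.of ((SemidirectProduct.inl ((φ g) h)) : H ⋊[φ] G)
            = Abelianization.of (SemidirectProduct.inl h)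
        rw [SemidirectProduct.inl_aut, map_mul, map_mul, map_inv]
        exact mul_inv_cancel_comm _ _
      show fH (Abelianization.map (φ g).toMonoidHom (Abelianization.of h))
          * fH ((Abelianization.of h)⁻¹) = 1
      rw [Abelianization.map_of, map_inv]
      simp only [MulEquiv.coe_toMonoidHom]
      rw [this, mul_inv_cancel]
  let fHq : (Abelianization H ⧸ N) →* Abelianization (H ⋊[φ] G) :=
    QuotientGroup.lift N fH (fun x hx => hker hx)
  let bwd : Abelianization G × (Abelianization H ⧸ N) →* Abelianization (H ⋊[φ] G) :=
    fG.coprod fHq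
  refine ⟨MonoidHom.toMulEquiv fwd bwd ?_ ?_⟩
  · apply Abelianization.hom_ext
    ext x
    show bwd (fwd0 x) = Abelianization.of x
    show fG (Abelianization.of x.right) * fHq (QuotientGroup.mk (Abelianization.of x.left))
        = Abelianization.of x
    show Abelianization.of ((SemidirectProduct.inr x.right : H ⋊[φ] G))
        * Abelianization.of (SemidirectProduct.inl x.left) = Abelianization.of x
    rw [mul_comm, ← map_mul, SemidirectProduct.inl_left_mul_inr_right]
  · apply MonoidHom.ext
    rintro ⟨a, b⟩
    have hab : (a, b) = (a, (1 : Abelianization H ⧸ N)) * (1, b) := by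
      simp
    rw [hab, map_mul, map_mul]
    congr 1
    · induction a using QuotientGroup.induction_on with
      | _ g =>
        show fwd (bwd (Abelianization.of g, 1)) = _
        have : bwd (Abelianization.of g, 1) =
            Abelianization.of ((SemidirectProduct.inr g : H ⋊[φ] G)) := by
          show fG (Abelianization.of g) * fHq 1 = _
          simp [fG]
        rw [this]
        show fwd0 (SemidirectProduct.inr g) = _
        show (Abelianization.of ((SemidirectProduct.inr g : H ⋊[φ] G)).right,
            (QuotientGroup.mk (Abelianization.of
              ((SemidirectProduct.inr g : H ⋊[φ] G)).left) : Abelianization H ⧸ N)) = _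
        simp
        rfl
    · induction b using QuotientGroup.induction_on with
      | _ b =>
        induction b using QuotientGroup.induction_on with
        | _ h =>
          show fwd (bwd (1, QuotientGroup.mk (Abelianization.of h))) = _
          have : bwd (1, QuotientGroup.mk (Abelianization.of h)) =
              Abelianization.of ((SemidirectProduct.inl h : H ⋊[φ] G)) := by
            show fG 1 * fHq (QuotientGroup.mk (Abelianization.of h)) = _
            simp [fHq, fH]
          rw [this]
          show fwd0 (SemidirectProduct.inl h) = _
          show (Abelianization.of ((SemidirectProduct.inl h : H ⋊[φ] G)).right,
              (QuotientGroup.mk (Abelianization.of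
                ((SemidirectProduct.inl h : H ⋊[φ] G)).left) : Abelianization H ⧸ N)) = _
          simp
          rfl
end

section
/- If T is a set with at least two elements, then the abelianization of the group of finitary permutations of T is isomorphic to Z/2Z. -/
open Equiv Equiv.Perm

/-- The group of finitary permutations of `T`. -/
def finitaryPerm (T : Type*) : Subgroup (Equiv.Perm T) where
  carrier := {σ | {x | σ x ≠ x}.Finite}
  one_mem' := by simp
  mul_mem' := by
    intro σ τ hσ hτ
    refine (hσ.union hτ).subset ?_
    intro x hx
    by_cases h : τ x = x
    · exact Or.inl (by simpa [Equiv.Perm.mul_apply, h] using hx)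
    · exact Or.inr h
  inv_mem' := by
    intro σ hσ
    refine (hσ.image σ).subset ?_
    intro x hx
    simp only [Set.mem_setOf_eq] at hx
    refine ⟨σ⁻¹ x, ?_, by simp⟩
    simp only [Set.mem_setOf_eq, Equiv.Perm.inv_def, Equiv.apply_symm_apply]
    exact fun h => hx h.symm

namespace FinAux

variable {T : Type*}

lemma sign_congr {α : Type*} (d1 d2 : DecidableEq α) (F1 F2 : Fintype α) (g : Perm α) :
    @sign α d1 F1 g = @sign α d2 F2 g := by
  rw [Subsingleton.elim d1 d2, Subsingleton.elim F1 F2]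

lemma invOn {σ : Perm T} {u : Set T} (h : ∀ x, σ x ≠ x → x ∈ u) :
    ∀ x, σ x ∈ u ↔ x ∈ u := by
  intro x
  by_cases hx : σ x = x
  · rw [hx]
  · constructor
    · intro _
      exact h x hx
    · intro _
      exact h (σ x) (fun hc => hx (σ.injective hc))

noncomputable def signOn (σ : Perm T) {u : Set T} (hu : u.Finite)
    (hinv : ∀ x, σ x ∈ u ↔ x ∈ u) : ℤˣ :=
  @sign _ (Classical.decEq _) hu.fintype (σ.subtypePerm hinv)

lemma signOn_eq (σ : Perm T) {u : Set T} (hu : u.Finite) (hinv : ∀ x, σ x ∈ u ↔ x ∈ u)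
    (hsupp : ∀ x, σ x ≠ x → x ∈ u) (hs : {x | σ x ≠ x}.Finite) :
    signOn σ hu hinv = signOn σ hs (invOn fun _ hx => hx) := by
  classical
  unfold signOn
  set t : Set T := {x | σ x ≠ x} with ht
  letI : Fintype ↥u := hu.fintype
  letI : Fintype ↥t := hs.fintype
  set f := σ.subtypePerm hinv with hf
  have h₁ : ∀ x : u, (((f x) : T) ∈ t) ↔ ((x : T) ∈ t) := by
    intro x
    simp only [hf, subtypePerm_apply, ht, Set.mem_setOf_eq]
    exact (not_iff_not.2 ⟨fun h => σ.injective h, fun h => congrArg σ h⟩)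
  have h₂ : ∀ x : u, f x ≠ x → (x : T) ∈ t := by
    intro x hx hc
    exact hx (Subtype.ext (by simpa [hf] using hc))
  let e : {x : u // (x : T) ∈ t} ≃ ↥t :=
    Equiv.subtypeSubtypeEquivSubtype (fun {x} hx => hsupp x hx)
  have hcongr : (e.permCongr (f.subtypePerm h₁)) = σ.subtypePerm (invOn fun _ hx => hx) := by
    ext x
    rfl
  calc @sign _ (Classical.decEq _) hu.fintype f
      = sign f := sign_congr _ _ _ _ _
    _ = sign (f.subtypePerm h₁) :=
        (sign_subtypePerm f (p := fun x : u => (x : T) ∈ t) h₁ h₂).symm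
    _ = sign (e.permCongr (f.subtypePerm h₁)) := (sign_permCongr e _).symm
    _ = sign (σ.subtypePerm (invOn (u := t) fun _ hx => hx)) := by rw [hcongr]
    _ = @sign _ (Classical.decEq _) hs.fintype (σ.subtypePerm (invOn (u := t) fun _ hx => hx)) :=
        sign_congr _ _ _ _ _

/-- The sign of a finitary permutation. -/
noncomputable def fsign (g : finitaryPerm T) : ℤˣ :=
  signOn g.1 g.2 (invOn fun _ hx => hx)

lemma fsign_mul (g h : finitaryPerm T) : fsign (g * h) = fsign g * fsign h := by
  obtain ⟨σ, hσ⟩ := g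
  obtain ⟨τ, hτ⟩ := h
  have hσ' : {x | σ x ≠ x}.Finite := hσ
  have hτ' : {x | τ x ≠ x}.Finite := hτ
  set u : Set T := {x | σ x ≠ x} ∪ {x | τ x ≠ x} with hu
  have hufin : u.Finite := hσ'.union hτ'
  have hsub_σ : ∀ x, σ x ≠ x → x ∈ u := fun _ hx => Or.inl hx
  have hsub_τ : ∀ x, τ x ≠ x → x ∈ u := fun _ hx => Or.inr hx
  have hsub_στ : ∀ x, (σ * τ) x ≠ x → x ∈ u := by
    intro x hx
    by_cases h : τ x = x
    · exact Or.inl (by simpa [Equiv.Perm.mul_apply, h] using hx)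
    · exact Or.inr h
  have h1 : fsign (⟨σ, hσ⟩ * ⟨τ, hτ⟩) = signOn (σ * τ) hufin (invOn hsub_στ) :=
    (signOn_eq (σ * τ) hufin (invOn hsub_στ) hsub_στ _).symm
  have h2 : fsign (⟨σ, hσ⟩ : finitaryPerm T) = signOn σ hufin (invOn hsub_σ) :=
    (signOn_eq σ hufin (invOn hsub_σ) hsub_σ _).symm
  have h3 : fsign (⟨τ, hτ⟩ : finitaryPerm T) = signOn τ hufin (invOn hsub_τ) :=
    (signOn_eq τ hufin (invOn hsub_τ) hsub_τ _).symm
  rw [h1, h2, h3]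
  unfold signOn
  rw [← map_mul, subtypePerm_mul]

/-- The sign of a finitary permutation, as a monoid hom. -/
noncomputable def fsignHom : finitaryPerm T →* ℤˣ where
  toFun := fsign
  map_one' := by
    unfold fsign signOn
    convert map_one (@sign _ (Classical.decEq _)
      ((1 : finitaryPerm T).2 : ({x | (1 : Perm T) x ≠ x}).Finite).fintype)
    rfl
  map_mul' := fsign_mul

variable [DecidableEq T]

lemma swap_mem (a b : T) : Equiv.swap a b ∈ finitaryPerm T := by
  refine ((Set.finite_singleton b).insert a).subset ?_
  intro x hx
  simp only [Set.mem_setOf_eq] at hx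
  by_contra h
  simp only [Set.mem_insert_iff, Set.mem_singleton_iff, not_or] at h
  exact hx (Equiv.swap_apply_of_ne_of_ne h.1 h.2)

/-- A transposition as a finitary permutation. -/
def swapF (a b : T) : finitaryPerm T := ⟨Equiv.swap a b, swap_mem a b⟩

lemma fsign_swapF {a b : T} (hab : a ≠ b) : fsign (swapF a b) = -1 := by
  have hfin : ({a, b} : Set T).Finite := (Set.finite_singleton b).insert a
  have hsub : ∀ x, Equiv.swap a b x ≠ x → x ∈ ({a, b} : Set T) := by
    intro x hx
    by_contra h
    simp only [Set.mem_insert_iff, Set.mem_singleton_iff, not_or] at h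
    exact hx (Equiv.swap_apply_of_ne_of_ne h.1 h.2)
  have key : fsign (swapF a b) = signOn (Equiv.swap a b) hfin (invOn hsub) :=
    (signOn_eq (Equiv.swap a b) hfin (invOn hsub) hsub (swapF a b).2).symm
  rw [key]
  unfold signOn
  have ha : a ∈ ({a, b} : Set T) := Or.inl rfl
  have hb : b ∈ ({a, b} : Set T) := Or.inr rfl
  letI : DecidableEq ↥({a, b} : Set T) := Classical.decEq _
  have hperm : (Equiv.swap a b).subtypePerm (invOn hsub) =
      Equiv.swap (⟨a, ha⟩ : ↥({a, b} : Set T)) ⟨b, hb⟩ := by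
    ext ⟨x, hx⟩
    rcases hx with rfl | hx
    · simp [Subtype.ext_iff, Equiv.swap_apply_left]
    · rcases hx with rfl
      simp [Subtype.ext_iff, Equiv.swap_apply_right]
  rw [hperm]
  have : (⟨a, ha⟩ : ↥({a, b} : Set T)) ≠ ⟨b, hb⟩ := fun h => hab (congrArg Subtype.val h)
  exact @sign_swap _ (Classical.decEq _) hfin.fintype _ _ this

/-- The set of transpositions inside the finitary permutation group. -/
def SwapSet (T : Type*) [DecidableEq T] : Set (finitaryPerm T) :=
  {g | ∃ a b : T, a ≠ b ∧ g = swapF a b}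

lemma mem_closure_swapSet (g : finitaryPerm T) : g ∈ Subgroup.closure (SwapSet T) := by
  suffices H : ∀ (n : ℕ) (g : finitaryPerm T), ({x | g.1 x ≠ x}).ncard ≤ n →
      g ∈ Subgroup.closure (SwapSet T) by
    exact H _ g le_rfl
  intro n
  induction n with
  | zero =>
    intro g hg
    have hfin : ({x | g.1 x ≠ x}).Finite := g.2
    have : ({x | g.1 x ≠ x}) = ∅ := by
      rwa [Nat.le_zero, Set.ncard_eq_zero hfin] at hg
    have hg1 : g = 1 := by
      apply Subtype.ext
      ext x
      by_contra hx
      exact (Set.eq_empty_iff_forall_notMem.1 this x) hx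
    rw [hg1]
    exact one_mem _
  | succ n ih =>
    intro g hg
    rcases Set.eq_empty_or_nonempty ({x | g.1 x ≠ x}) with hemp | ⟨a, ha⟩
    · have hg1 : g = 1 := by
        apply Subtype.ext
        ext x
        by_contra hx
        exact (Set.eq_empty_iff_forall_notMem.1 hemp x) hx
      rw [hg1]
      exact one_mem _
    · have ha' : g.1 a ≠ a := ha
      set s := swapF a (g.1 a) with hs
      have hsS : s ∈ SwapSet T := ⟨a, g.1 a, fun h => ha' h.symm, rfl⟩
      have hsupp : ∀ x, (s * g).1 x ≠ x → (g.1 x ≠ x ∧ x ≠ a) := by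
        intro x hx
        constructor
        · intro hgx
          apply hx
          show Equiv.swap a (g.1 a) (g.1 x) = x
          rw [hgx]
          apply Equiv.swap_apply_of_ne_of_ne
          · intro h
            exact ha' (h ▸ hgx)
          · intro h
            exact ha' (g.1.injective (h ▸ hgx))
        · intro hxa
          apply hx
          rw [hxa]
          show Equiv.swap a (g.1 a) (g.1 a) = a
          exact Equiv.swap_apply_right a (g.1 a)
      have hsubset : {x | (s * g).1 x ≠ x} ⊆ {x | g.1 x ≠ x} \ {a} := by
        intro x hx
        exact ⟨(hsupp x hx).1, (hsupp x hx).2⟩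
      have hlt : ({x | (s * g).1 x ≠ x}).ncard ≤ n := by
        have h1 : ({x | (s * g).1 x ≠ x}).ncard ≤ ({x | g.1 x ≠ x} \ {a}).ncard :=
          Set.ncard_le_ncard hsubset g.2.diff
        have h2 : ({x | g.1 x ≠ x} \ {a}).ncard < ({x | g.1 x ≠ x}).ncard :=
          Set.ncard_diff_singleton_lt_of_mem ha g.2
        omega
      have hmem : s * g ∈ Subgroup.closure (SwapSet T) := ih (s * g) hlt
      have : g = s⁻¹ * (s * g) := by group
      rw [this]
      exact mul_mem (inv_mem (Subgroup.subset_closure hsS))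
        hmem

lemma conj_swapF {a b c d : T} (hab : a ≠ b) (hcd : c ≠ d) :
    ∃ ρ : finitaryPerm T, ρ * swapF a b * ρ⁻¹ = swapF c d := by
  refine ⟨⟨Equiv.swap (Equiv.swap a c b) d, swap_mem _ _⟩ * ⟨Equiv.swap a c, swap_mem _ _⟩, ?_⟩
  apply Subtype.ext
  show (Equiv.swap (Equiv.swap a c b) d * Equiv.swap a c) * Equiv.swap a b *
      ((Equiv.swap (Equiv.swap a c b) d * Equiv.swap a c))⁻¹ = Equiv.swap c d
  set f : Perm T := Equiv.swap (Equiv.swap a c b) d * Equiv.swap a c with hf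
  have hfa : f a = c := by
    show Equiv.swap (Equiv.swap a c b) d (Equiv.swap a c a) = c
    rw [Equiv.swap_apply_left]
    apply Equiv.swap_apply_of_ne_of_ne
    · intro h
      have h2 : Equiv.swap a c b = Equiv.swap a c a := by
        rw [Equiv.swap_apply_left]
        exact h.symm
      exact hab ((Equiv.swap a c).injective h2).symm
    · exact hcd
  have hfb : f b = d := by
    show Equiv.swap (Equiv.swap a c b) d (Equiv.swap a c b) = d
    exact Equiv.swap_apply_left _ _
  rw [← Equiv.swap_apply_apply, hfa, hfb]

end FinAux

/-- `ℤˣ` is isomorphic to `ℤ/2ℤ` (written multiplicatively). -/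
noncomputable def unitsEquiv : ℤˣ ≃* Multiplicative (ZMod 2) where
  toFun u := Multiplicative.ofAdd (if u = 1 then 0 else 1)
  invFun x := if x = Multiplicative.ofAdd 0 then 1 else -1
  left_inv u := by
    rcases Int.units_eq_one_or u with rfl | rfl <;> decide
  right_inv x := by revert x; decide
  map_mul' u v := by
    rcases Int.units_eq_one_or u with rfl | rfl <;>
      rcases Int.units_eq_one_or v with rfl | rfl <;> decide

/-- If `T` has at least two elements, the abelianization of the group of
finitary permutations of `T` is isomorphic to `ℤ/2ℤ`. -/
theorem abelianization_finitaryPerm (T : Type*) (hT : ∃ a b : T, a ≠ b) :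
    Nonempty (Abelianization ↥(finitaryPerm T) ≃* Multiplicative (ZMod 2)) := by
  letI := Classical.decEq T
  obtain ⟨a, b, hab⟩ := hT
  set φ : Abelianization ↥(finitaryPerm T) →* ℤˣ := Abelianization.lift FinAux.fsignHom with hφ
  set g : Abelianization ↥(finitaryPerm T) := Abelianization.of (FinAux.swapF a b) with hgdef
  have hswap_sq : FinAux.swapF a b * FinAux.swapF a b = 1 := by
    apply Subtype.ext
    show Equiv.swap a b * Equiv.swap a b = 1
    exact Equiv.swap_mul_self a b
  have hg2 : g * g = 1 := by rw [hgdef, ← map_mul, hswap_sq, map_one]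
  have hφg : φ g = -1 := by
    rw [hgdef, hφ, Abelianization.lift_apply_of]
    exact FinAux.fsign_swapF hab
  have hofswap : ∀ y ∈ FinAux.SwapSet T, Abelianization.of y = g := by
    rintro y ⟨c, d, hcd, rfl⟩
    obtain ⟨ρ, hρ⟩ := FinAux.conj_swapF hab hcd
    rw [← hρ, map_mul, map_mul, map_inv, mul_comm (Abelianization.of ρ) _, mul_assoc,
      mul_inv_cancel, mul_one, hgdef]
  have hsurj : Function.Surjective (Abelianization.of (G := ↥(finitaryPerm T))) := by
    intro x
    exact QuotientGroup.induction_on x fun z => ⟨z, rfl⟩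
  have hgen : ∀ x : Abelianization ↥(finitaryPerm T), x = 1 ∨ x = g := by
    intro x
    obtain ⟨y, rfl⟩ := hsurj x
    have hy : Abelianization.of y ∈ Subgroup.map Abelianization.of
        (Subgroup.closure (FinAux.SwapSet T)) :=
      Subgroup.mem_map_of_mem _ (FinAux.mem_closure_swapSet y)
    rw [MonoidHom.map_closure] at hy
    have himg : Abelianization.of '' FinAux.SwapSet T ⊆ {g} := by
      rintro _ ⟨z, hzS, rfl⟩
      exact hofswap z hzS
    have hy2 : Abelianization.of y ∈ Subgroup.closure {g} :=
      Subgroup.closure_mono himg hy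
    rw [Subgroup.mem_closure_singleton] at hy2
    obtain ⟨n, hn⟩ := hy2
    rcases Int.even_or_odd n with ⟨k, hk⟩ | ⟨k, hk⟩
    · left
      rw [← hn, hk, zpow_add, ← mul_zpow, hg2, one_zpow]
    · right
      rw [← hn, hk, zpow_add, zpow_one, zpow_mul, zpow_two, hg2, one_zpow, one_mul]
  have hinj : Function.Injective φ := by
    intro x y hxy
    rcases hgen x with rfl | rfl <;> rcases hgen y with rfl | rfl
    · rfl
    · exfalso
      rw [map_one, hφg] at hxy
      exact absurd hxy (by decide)
    · exfalso
      rw [map_one, hφg] at hxy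
      exact absurd hxy (by decide)
    · rfl
  have hsurjφ : Function.Surjective φ := by
    intro u
    rcases Int.units_eq_one_or u with rfl | rfl
    · exact ⟨1, map_one φ⟩
    · exact ⟨g, hφg⟩
  exact ⟨(MulEquiv.ofBijective φ ⟨hinj, hsurjφ⟩).trans unitsEquiv⟩
end

section
/- Let G be a group, T a set, and Σ = FS(T). Define ε : ⊕_{x∈T} G^ab → G^ab by ε((g_x)_x) = ∏_x g_x (a finite product since all but finitely many entries are trivial). Then the kernel of ε equals the subgroup of ⊕_{x∈T} G^ab generated by all elements of the form (σ • g) * g⁻¹ where σ ∈ Σ acts by permuting coordinates and g ∈ ⊕_{x∈T} G^ab. -/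
/-- The finitary alternating group on `T`: the subgroup generated by products of
two transpositions. -/
def finitaryAlt (T : Type*) [DecidableEq T] : Subgroup (Equiv.Perm T) :=
  Subgroup.closure {σ | ∃ a b c d : T, a ≠ b ∧ c ≠ d ∧ σ = Equiv.swap a b * Equiv.swap c d}

/-- The restricted direct product `⊕_{x ∈ T} G` of copies of a group `G`. -/
def restrictedProd (T G : Type*) [Group G] : Subgroup (T → G) where
  carrier := {f | {x | f x ≠ 1}.Finite}
  one_mem' := by simp
  mul_mem' := by
    intro f g hf hg
    refine (hf.union hg).subset ?_
    intro x hx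
    by_cases h : f x = 1
    · exact Or.inr (by simpa [Pi.mul_apply, h] using hx)
    · exact Or.inl h
  inv_mem' := by
    intro f hf
    refine hf.subset ?_
    intro x hx
    simp only [Set.mem_setOf_eq, Pi.inv_apply, ne_eq, inv_eq_one] at hx ⊢
    exact hx

/-- A permutation of `T` acts on the restricted product by permuting coordinates. -/
def permAut (T G : Type*) [Group G] (σ : Equiv.Perm T) : MulAut ↥(restrictedProd T G) where
  toFun f := ⟨fun x => f.1 (σ.symm x), by
    refine (f.2.image σ).subset ?_
    intro x hx
    exact ⟨σ.symm x, hx, by simp⟩⟩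
  invFun f := ⟨fun x => f.1 (σ x), by
    refine (f.2.image σ.symm).subset ?_
    intro x hx
    exact ⟨σ x, hx, by simp⟩⟩
  left_inv f := by
    ext x
    simp
  right_inv f := by
    ext x
    simp
  map_mul' f g := by
    ext x
    rfl

/-- The homomorphism from finitary permutations of `T` to automorphisms of
`⊕_{x ∈ T} G`, giving the restricted wreath product `G wr_T FS(T)`. -/
def wreathAction (G T : Type*) [Group G] :
    ↥(finitaryPerm T) →* MulAut ↥(restrictedProd T G) where
  toFun σ := permAut T G σ.1
  map_one' := by
    ext f x
    rfl
  map_mul' σ τ := by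
    ext f x
    rfl

/-- Multiplying together all the (finitely many nontrivial) coordinates. -/
noncomputable def epsHom (T G : Type*) [CommGroup G] : ↥(restrictedProd T G) →* G where
  toFun f := ∏ᶠ x, f.1 x
  map_one' := by
    simp [restrictedProd]
  map_mul' f g := finprod_mul_distrib f.2 g.2


section Aux
variable {T A : Type*} [CommGroup A]

open Classical in
noncomputable def sing (x : T) (a : A) : ↥(restrictedProd T A) :=
  ⟨fun y => if y = x then a else 1, Set.Finite.subset (Set.finite_singleton x) (by
    intro y hy
    simp only [Set.mem_setOf_eq] at hy
    by_contra h
    simp only [Set.mem_singleton_iff] at h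
    simp [h] at hy)⟩

open Classical in
lemma sing_apply (x y : T) (a : A) : (sing x a).1 y = if y = x then a else 1 := rfl

lemma eps_sing (x : T) (a : A) : epsHom T A (sing x a) = a := by
  classical
  show (∏ᶠ y, (sing x a).1 y) = a
  rw [finprod_eq_single _ x]
  · simp [sing_apply]
  · intro y hy; simp [sing_apply, hy]

lemma swap_mem_finitaryPerm [DecidableEq T] (x y : T) :
    Equiv.swap x y ∈ finitaryPerm T := by
  refine Set.Finite.subset ((Set.finite_singleton y).insert x) ?_
  intro z hz
  simp only [Set.mem_setOf_eq] at hz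
  by_contra h
  simp only [Set.mem_insert_iff, Set.mem_singleton_iff, not_or] at h
  exact hz (Equiv.swap_apply_of_ne_of_ne h.1 h.2)
lemma gen_mem [DecidableEq T] (x y : T) (hxy : x ≠ y) (a : A) :
    sing y a * (sing x a)⁻¹ ∈ {b : ↥(restrictedProd T A) |
      ∃ (σ : ↥(finitaryPerm T)) (g : ↥(restrictedProd T A)),
        b = wreathAction A T σ g * g⁻¹} := by
  classical
  refine ⟨⟨Equiv.swap x y, swap_mem_finitaryPerm x y⟩, sing x a, ?_⟩
  have : wreathAction A T ⟨Equiv.swap x y, swap_mem_finitaryPerm x y⟩ (sing x a) = sing y a := by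
    apply Subtype.ext
    funext z
    show (sing x a).1 ((Equiv.swap x y).symm z) = (sing y a).1 z
    rw [Equiv.symm_swap, sing_apply, sing_apply]
    by_cases hz : z = y
    · simp [hz, Equiv.swap_apply_right]
    · by_cases hz' : z = x
      · simp [hz', Equiv.swap_apply_left, hxy.symm, hxy]
      · simp [Equiv.swap_apply_of_ne_of_ne hz' hz, hz, hz']
  rw [this]

lemma eps_apply (f : ↥(restrictedProd T A)) : epsHom T A f = ∏ᶠ x, f.1 x := rfl

lemma mem_closure_of_eps_eq_one :
    ∀ (n : ℕ) (f : ↥(restrictedProd T A)), f.2.toFinset.card ≤ n →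
      epsHom T A f = 1 →
      f ∈ Subgroup.closure {b : ↥(restrictedProd T A) |
        ∃ (σ : ↥(finitaryPerm T)) (g : ↥(restrictedProd T A)),
          b = wreathAction A T σ g * g⁻¹} := by
  classical
  intro n
  induction n with
  | zero =>
    intro f hcard _
    have : f = 1 := by
      apply Subtype.ext
      funext z
      by_contra hz
      have : z ∈ f.2.toFinset := (Set.Finite.mem_toFinset (s := {x | f.1 x ≠ 1}) f.2).mpr (by simpa using hz)
      simp [Finset.card_eq_zero.mp (Nat.le_zero.mp hcard)] at this
    rw [this]; exact one_mem _
  | succ n ih =>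
    intro f hcard hε
    by_cases hf1 : f = 1
    · rw [hf1]; exact one_mem _
    have hx : ∃ x, f.1 x ≠ 1 := by
      by_contra h
      push_neg at h
      exact hf1 (Subtype.ext (funext fun z => h z))
    obtain ⟨x, hx⟩ := hx
    set a := f.1 x with ha
    by_cases hy : ∃ y, y ≠ x ∧ f.1 y ≠ 1
    · obtain ⟨y, hyx, hy⟩ := hy
      set gen := sing y a * (sing x a)⁻¹ with hgen
      set f' := f * gen with hf'
      have hf'x : ∀ z, f'.1 z = f.1 z * ((sing y a).1 z * ((sing x a).1 z)⁻¹) := fun z => rfl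
      have hsupp : ∀ z, f'.1 z ≠ 1 → z ∈ f.2.toFinset.erase x := by
        intro z hz
        rw [hf'x, sing_apply, sing_apply] at hz
        by_cases hzx : z = x
        · subst hzx
          simp [hyx.symm, ← ha] at hz
        · refine Finset.mem_erase.mpr ⟨hzx, ?_⟩
          refine (Set.Finite.mem_toFinset (s := {x | f.1 x ≠ 1}) f.2).mpr ?_
          intro hfz
          by_cases hzy : z = y
          · subst hzy; exact hy hfz
          · simp [hfz, hzx, hzy] at hz
      have hcard' : f'.2.toFinset.card ≤ n := by
        have h1 : f'.2.toFinset ⊆ f.2.toFinset.erase x := by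
          intro z hz
          exact hsupp z ((Set.Finite.mem_toFinset (s := {x | f'.1 x ≠ 1}) f'.2).mp hz)
        have h2 : (f.2.toFinset.erase x).card = f.2.toFinset.card - 1 :=
          Finset.card_erase_of_mem ((Set.Finite.mem_toFinset (s := {z | f.1 z ≠ 1}) f.2).mpr hx)
        calc f'.2.toFinset.card ≤ (f.2.toFinset.erase x).card := Finset.card_le_card h1
          _ = f.2.toFinset.card - 1 := h2
          _ ≤ n := by omega
      have hεgen : epsHom T A gen = 1 := by
        rw [hgen, map_mul, map_inv, eps_sing, eps_sing, mul_inv_cancel]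
      have hεf' : epsHom T A f' = 1 := by
        rw [hf', map_mul, hε, hεgen, one_mul]
      have hmem' := ih f' hcard' hεf'
      have hgenmem := Subgroup.subset_closure (gen_mem x y hyx.symm a)
      have : f = f' * gen⁻¹ := by rw [hf', mul_inv_cancel_right]
      rw [this]
      exact mul_mem hmem' (inv_mem hgenmem)
    · exfalso
      push_neg at hy
      have : epsHom T A f = a := by
        rw [eps_apply, finprod_eq_single _ x]
        intro z hz
        exact hy z hz
      rw [hε] at this
      exact hx this.symm

end Aux

/-- For `ε : ⊕_{x∈T} G^ab → G^ab` the product-of-coordinates map, the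
kernel of `ε` equals the subgroup generated by the elements `(σ • g) * g⁻¹` for
`σ ∈ FS(T)` acting by permuting coordinates. -/
theorem ker_eps_eq_closure (G T : Type*) [Group G] :
    (epsHom T (Abelianization G)).ker = Subgroup.closure
      {a : ↥(restrictedProd T (Abelianization G)) |
        ∃ (σ : ↥(finitaryPerm T)) (g : ↥(restrictedProd T (Abelianization G))),
          a = wreathAction (Abelianization G) T σ g * g⁻¹} := by
  apply le_antisymm
  · intro f hf
    exact mem_closure_of_eps_eq_one f.2.toFinset.card f le_rfl hf
  · rw [Subgroup.closure_le]
    rintro b ⟨σ, g, rfl⟩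
    have : epsHom T (Abelianization G) (wreathAction (Abelianization G) T σ g) =
        epsHom T (Abelianization G) g := by
      show (∏ᶠ z, g.1 (σ.1.symm z)) = ∏ᶠ z, g.1 z
      exact finprod_comp_equiv σ.1.symm
    simp only [SetLike.mem_coe, MonoidHom.mem_ker, map_mul, map_inv, this, mul_inv_cancel]
end

section
/- Let R be a commutative ring with unity, M a right R-module, and n ≥ 2. Then the abelianization of the semidirect product GL_n(R) ⋉ Mⁿ (with GL_n(R) acting on Mⁿ by matrix multiplication) is isomorphic to the abelianization of GL_n(R). -/
/-- Matrix action on `Fin n → M` by matrix-vector multiplication. -/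
def matSMul (R M : Type*) [CommRing R] [AddCommGroup M] [Module R M] (n : ℕ)
    (A : Matrix (Fin n) (Fin n) R) : AddMonoid.End (Fin n → M) :=
  AddMonoidHom.mk' (fun x i => ∑ j, A i j • x j) (by
    intro x y
    funext i
    simp [smul_add, Finset.sum_add_distrib])

def matSMulHom (R M : Type*) [CommRing R] [AddCommGroup M] [Module R M] (n : ℕ) :
    Matrix (Fin n) (Fin n) R →* AddMonoid.End (Fin n → M) where
  toFun := matSMul R M n
  map_one' := by
    refine AddMonoidHom.ext fun x => funext fun i => ?_
    simp [matSMul, Matrix.one_apply, Finset.sum_ite_eq]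
    rfl
  map_mul' A B := by
    refine AddMonoidHom.ext fun x => funext fun i => ?_
    show ∑ j, (A * B) i j • x j = ∑ k, A i k • ∑ j, B k j • x j
    simp only [Matrix.mul_apply, Finset.sum_smul, Finset.smul_sum, mul_smul]
    exact Finset.sum_comm

def unitsEndToAddAut (P : Type*) [AddCommGroup P] : (AddMonoid.End P)ˣ →* Multiplicative (AddAut P) where
  toFun u := Multiplicative.ofAdd
    { toFun := u.val
      invFun := (↑u⁻¹ : AddMonoid.End P)
      left_inv := fun x => DFunLike.congr_fun u.inv_mul x
      right_inv := fun x => DFunLike.congr_fun u.mul_inv x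
      map_add' := u.val.map_add }
  map_one' := rfl
  map_mul' _ _ := rfl

def addAutToMulAut (P : Type*) [AddGroup P] : Multiplicative (AddAut P) →* MulAut (Multiplicative P) where
  toFun e := AddEquiv.toMultiplicative (Multiplicative.toAdd e)
  map_one' := rfl
  map_mul' _ _ := rfl

/-- The action of `GL n R` on the additive group `Mⁿ` (written multiplicatively). -/
def glAction (R M : Type*) [CommRing R] [AddCommGroup M] [Module R M] (n : ℕ) :
    GL (Fin n) R →* MulAut (Multiplicative (Fin n → M)) :=
  (addAutToMulAut _).comp ((unitsEndToAddAut _).comp (Units.map (matSMulHom R M n)))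

section Aux
variable (R M : Type*) [CommRing R] [AddCommGroup M] [Module R M] (n : ℕ)

lemma glAction_apply' (A : GL (Fin n) R) (y : Fin n → M) :
    glAction R M n A (Multiplicative.ofAdd y)
      = Multiplicative.ofAdd (matSMul R M n A.val y) := rfl

lemma matSMul_transvection (i j : Fin n) (m : M) :
    matSMul R M n (Matrix.transvection i j (1 : R)) (Pi.single j m)
      = Pi.single j m + Pi.single i m := by
  funext k
  show (∑ l, Matrix.transvection i j (1:R) k l • (Pi.single j m : Fin n → M) l) = _
  rw [Finset.sum_eq_single j]
  · simp [Matrix.transvection, Matrix.add_apply, Matrix.one_apply, Matrix.single, Matrix.single_apply,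
      Pi.single_apply, add_smul, ite_smul, zero_smul, one_smul, eq_comm]
  · intro l _ hl
    simp [Pi.single_eq_of_ne hl]
  · simp

/-- The transvection as an element of `GL n R`. -/
def transGL {i j : Fin n} (hij : i ≠ j) : GL (Fin n) R where
  val := Matrix.transvection i j 1
  inv := Matrix.transvection i j (-1)
  val_inv := by rw [Matrix.transvection_mul_transvection_same _ _ hij]; simp
  inv_val := by rw [Matrix.transvection_mul_transvection_same _ _ hij]; simp

lemma transGL_coe {i j : Fin n} (hij : i ≠ j) :
    ((transGL R n hij : GL (Fin n) R) : Matrix (Fin n) (Fin n) R)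
      = Matrix.transvection i j 1 := rfl

/-- Every element of `Mⁿ` vanishes in the abelianization of the semidirect product. -/
lemma abelianization_of_inl_eq_one (hn : 2 ≤ n) (x : Fin n → M) :
    (Abelianization.of (SemidirectProduct.inl (Multiplicative.ofAdd x) :
      Multiplicative (Fin n → M) ⋊[glAction R M n] GL (Fin n) R)) = 1 := by
  set f : (Fin n → M) → Abelianization
      (Multiplicative (Fin n → M) ⋊[glAction R M n] GL (Fin n) R) :=
    fun y => Abelianization.of (SemidirectProduct.inl (Multiplicative.ofAdd y)) with hf_def
  have hf : ∀ y z, f (y + z) = f y * f z := by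
    intro y z
    show Abelianization.of (SemidirectProduct.inl
      (Multiplicative.ofAdd y * Multiplicative.ofAdd z)) = _
    rw [map_mul, map_mul]
  have hsingle : ∀ (i : Fin n) (m : M), f (Pi.single i m) = 1 := by
    intro i m
    have h01 : (⟨0, by omega⟩ : Fin n) ≠ ⟨1, by omega⟩ := by
      intro h
      simpa using congrArg Fin.val h
    obtain ⟨j, hij⟩ : ∃ j : Fin n, i ≠ j := by
      by_cases h : i = ⟨0, by omega⟩
      · exact ⟨⟨1, by omega⟩, h ▸ h01⟩
      · exact ⟨⟨0, by omega⟩, h⟩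
    set A : GL (Fin n) R := transGL R n hij with hA
    have hcomm : f (Pi.single j m + Pi.single i m) = f (Pi.single j m) := by
      have h1 : (SemidirectProduct.inl
            (glAction R M n A (Multiplicative.ofAdd (Pi.single j m))) :
            Multiplicative (Fin n → M) ⋊[glAction R M n] GL (Fin n) R)
          = SemidirectProduct.inr A
            * SemidirectProduct.inl (Multiplicative.ofAdd (Pi.single j m))
            * SemidirectProduct.inr A⁻¹ :=
        SemidirectProduct.inl_aut A _
      have h2 : glAction R M n A (Multiplicative.ofAdd (Pi.single j m))
          = Multiplicative.ofAdd (Pi.single j m + Pi.single i m) := by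
        rw [glAction_apply', hA, transGL_coe, matSMul_transvection]
      simp only [hf_def]
      rw [← h2, h1, map_mul, map_mul, map_inv]
      exact mul_inv_cancel_comm _ _
    have := hcomm
    rw [hf] at this
    exact mul_left_cancel (a := f (Pi.single j m)) (by rw [this, mul_one])
  have hsum : ∀ (s : Finset (Fin n)), f (∑ i ∈ s, Pi.single i (x i)) = 1 := by
    intro s
    induction s using Finset.induction with
    | empty =>
      show Abelianization.of (SemidirectProduct.inl 1) = 1
      rw [map_one, map_one]
    | insert _ _ hni ih =>
      rw [Finset.sum_insert hni, hf, hsingle, one_mul, ih]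
  have := hsum Finset.univ
  rwa [Finset.univ_sum_single] at this

end Aux

/-- For a commutative ring `R`, a (right) `R`-module `M` and `n ≥ 2`,
the abelianization of `GL_n(R) ⋉ Mⁿ` is isomorphic to the abelianization of `GL_n(R)`. -/
theorem abelianization_gl_semidirect (R M : Type*) [CommRing R] [AddCommGroup M] [Module R M]
    (n : ℕ) (hn : 2 ≤ n) :
    Nonempty (Abelianization (Multiplicative (Fin n → M) ⋊[glAction R M n] GL (Fin n) R)
      ≃* Abelianization (GL (Fin n) R)) := by
  set SD := Multiplicative (Fin n → M) ⋊[glAction R M n] GL (Fin n) R with hSD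
  let toGL : Abelianization SD →* Abelianization (GL (Fin n) R) :=
    Abelianization.lift ((Abelianization.of).comp SemidirectProduct.rightHom)
  let back : Abelianization (GL (Fin n) R) →* Abelianization SD :=
    Abelianization.lift ((Abelianization.of).comp SemidirectProduct.inr)
  have h1 : back.comp toGL = MonoidHom.id _ := by
    apply Abelianization.hom_ext
    ext g
    show back (toGL (Abelianization.of g)) = Abelianization.of g
    rw [← SemidirectProduct.inl_left_mul_inr_right g]
    rw [map_mul, map_mul, map_mul]
    have hl : toGL (Abelianization.of (SemidirectProduct.inl g.left)) = 1 := by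
      show Abelianization.of (SemidirectProduct.rightHom (SemidirectProduct.inl g.left)) = 1
      rw [SemidirectProduct.rightHom_inl, map_one]
    have hinl : Abelianization.of (SemidirectProduct.inl g.left : SD) = 1 :=
      abelianization_of_inl_eq_one R M n hn (Multiplicative.toAdd g.left)
    rw [hl, map_one, hinl, one_mul, one_mul]
    show Abelianization.of (SemidirectProduct.inr
      (SemidirectProduct.rightHom (SemidirectProduct.inr g.right)) : SD) = _
    rw [SemidirectProduct.rightHom_inr]
  have h2 : toGL.comp back = MonoidHom.id _ := by
    apply Abelianization.hom_ext
    ext A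
    show toGL (back (Abelianization.of A)) = Abelianization.of A
    show Abelianization.of (SemidirectProduct.rightHom
      (SemidirectProduct.inr A : SD)) = _
    rw [SemidirectProduct.rightHom_inr]
  exact ⟨toGL.toMulEquiv back h1 h2⟩
end

section
/- Let R be a Noetherian commutative ring. Then the pp-definable subgroups of the right R-module R_R are exactly the (right) ideals of R. -/
/-- For a Noetherian commutative ring `R`, the pp-definable subgroups of
the module `R_R` are exactly the ideals of `R`: a subset `s ⊆ R` is the solution set of a
pp-formula `∃ y ⋀ᵢ (x rᵢ + Σₖ yₖ sᵢₖ = 0)` if and only if it is (the underlying set of) an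
ideal of `R`. -/
theorem pp_definable_iff_ideal (R : Type*) [CommRing R] [IsNoetherianRing R] (s : Set R) :
    (∃ (m t : ℕ) (r : Fin t → R) (c : Fin t → Fin m → R),
        s = {x : R | ∃ y : Fin m → R, ∀ i, x * r i + ∑ k, y k * c i k = 0}) ↔
      (∃ I : Ideal R, s = (I : Set R)) := by
  constructor
  · rintro ⟨m, t, r, c, rfl⟩
    refine ⟨{ carrier := {x : R | ∃ y : Fin m → R, ∀ i, x * r i + ∑ k, y k * c i k = 0}
              zero_mem' := ⟨0, fun i => by simp⟩
              add_mem' := ?_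
              smul_mem' := ?_ }, rfl⟩
    · rintro a b ⟨ya, ha⟩ ⟨yb, hb⟩
      refine ⟨ya + yb, fun i => ?_⟩
      have := ha i; have := hb i
      simp only [Pi.add_apply, add_mul]
      rw [Finset.sum_add_distrib]
      linear_combination ha i + hb i
    · rintro a x ⟨y, hy⟩
      refine ⟨fun k => a * y k, fun i => ?_⟩
      have : ∑ k, a * y k * c i k = a * ∑ k, y k * c i k := by
        rw [Finset.mul_sum]; exact Finset.sum_congr rfl fun k _ => by ring
      rw [smul_eq_mul, this]
      linear_combination a * hy i
  · rintro ⟨I, rfl⟩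
    obtain ⟨S, hS⟩ : I.FG := IsNoetherian.noetherian I
    set n := S.card
    set v : Fin n → R := fun k => (S.equivFin.symm k : R) with hv
    have hrange : Set.range v = (S : Set R) := by
      ext x
      constructor
      · rintro ⟨k, rfl⟩; exact (S.equivFin.symm k).2
      · rintro hx; exact ⟨S.equivFin ⟨x, hx⟩, by simp [hv]⟩
    refine ⟨n, 1, fun _ => 1, fun _ k => -(v k), ?_⟩
    ext x
    simp only [Set.mem_setOf_eq, SetLike.mem_coe]
    rw [← hS]
    show x ∈ Submodule.span R (S : Set R) ↔ _
    rw [← hrange, Submodule.mem_span_range_iff_exists_fun R]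
    constructor
    · rintro ⟨y, hy⟩
      refine ⟨y, fun _ => ?_⟩
      have : ∑ k, y k * -v k = -∑ k, y k • v k := by
        rw [← Finset.sum_neg_distrib]
        exact Finset.sum_congr rfl fun k _ => by rw [smul_eq_mul]; ring
      rw [this, hy]; ring
    · rintro ⟨y, hy⟩
      refine ⟨y, ?_⟩
      have h := hy 0
      have : ∑ k, y k * -v k = -∑ k, y k • v k := by
        rw [← Finset.sum_neg_distrib]
        exact Finset.sum_congr rfl fun k _ => by rw [smul_eq_mul]; ring
      rw [this] at h
      linear_combination -h
end

section
/- Let R be a Euclidean domain containing units u, v with u + v = 1. Then the commutator subgroup of GL_2(R) equals E_2(R), the subgroup generated by 2×2 elementary matrices. -/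
open Matrix

namespace CommGL2Aux

variable {R : Type*} [EuclideanDomain R]

/-- The set of elementary (transvection) matrices in `GL₂`. -/
def ES (R : Type*) [EuclideanDomain R] : Set (GL (Fin 2) R) :=
  {A : GL (Fin 2) R | ∃ (i j : Fin 2) (_ : i ≠ j) (r : R),
    (A : Matrix (Fin 2) (Fin 2) R) = Matrix.transvection i j r}

lemma transvection01 (r : R) : Matrix.transvection (0 : Fin 2) 1 r = !![1, r; 0, 1] := by
  ext i j
  fin_cases i <;> fin_cases j <;>
    simp [Matrix.transvection, Matrix.single, Matrix.one_apply]

lemma transvection10 (r : R) : Matrix.transvection (1 : Fin 2) 0 r = !![1, 0; r, 1] := by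
  ext i j
  fin_cases i <;> fin_cases j <;>
    simp [Matrix.transvection, Matrix.single, Matrix.one_apply]

def T01 (r : R) : GL (Fin 2) R :=
  ⟨!![1, r; 0, 1], !![1, -r; 0, 1],
    by simp [Matrix.mul_fin_two, Matrix.one_fin_two],
    by simp [Matrix.mul_fin_two, Matrix.one_fin_two]⟩

def T10 (r : R) : GL (Fin 2) R :=
  ⟨!![1, 0; r, 1], !![1, 0; -r, 1],
    by simp [Matrix.mul_fin_two, Matrix.one_fin_two],
    by simp [Matrix.mul_fin_two, Matrix.one_fin_two]⟩

lemma T01_mem (r : R) : T01 r ∈ Subgroup.closure (ES R) :=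
  Subgroup.subset_closure ⟨0, 1, by decide, r, (transvection01 r).symm⟩

lemma T10_mem (r : R) : T10 r ∈ Subgroup.closure (ES R) :=
  Subgroup.subset_closure ⟨1, 0, by decide, r, (transvection10 r).symm⟩

def W (R : Type*) [EuclideanDomain R] : GL (Fin 2) R := T01 (-1) * T10 1 * T01 (-1)

lemma W_val : ((W R : GL (Fin 2) R) : Matrix (Fin 2) (Fin 2) R) = !![0, -1; 1, 0] := by
  simp [W, T01, T10, Units.val_mul, Matrix.mul_fin_two]

lemma W_mem : W R ∈ Subgroup.closure (ES R) :=
  mul_mem (mul_mem (T01_mem _) (T10_mem _)) (T01_mem _)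

def Dg (a d : R) : GL (Fin 2) R := T01 a * T10 (-d) * T01 a * W R

lemma Dg_val (a d : R) (h : a * d = 1) :
    ((Dg a d : GL (Fin 2) R) : Matrix (Fin 2) (Fin 2) R) = !![a, 0; 0, d] := by
  simp only [Dg, Units.val_mul, T01, T10, W_val, Matrix.mul_fin_two]
  ext i j
  fin_cases i <;> fin_cases j <;>
    simp only [Fin.mk_zero, Fin.mk_one, Matrix.of_apply, Matrix.cons_val', Matrix.cons_val_zero, Matrix.cons_val_one, Matrix.head_cons,
      Matrix.empty_val', Matrix.cons_val_fin_one, Matrix.head_fin_const] <;>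
    first
      | ring1
      | linear_combination h | linear_combination -h
      | linear_combination (a : R) * h | linear_combination (-a : R) * h
      | linear_combination ((1 - a : R)) * h | linear_combination ((a - 1 : R)) * h
      | linear_combination ((1 + a : R)) * h | linear_combination (-(1 + a) : R) * h

lemma Dg_mem (a d : R) : Dg a d ∈ Subgroup.closure (ES R) :=
  mul_mem (mul_mem (mul_mem (T01_mem _) (T10_mem _)) (T01_mem _)) W_mem

lemma det_one_mem (c : R) :
    ∀ A : GL (Fin 2) R, (A : Matrix (Fin 2) (Fin 2) R) 1 0 = c →
      (A : Matrix (Fin 2) (Fin 2) R).det = 1 → A ∈ Subgroup.closure (ES R) := by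
  refine EuclideanDomain.r_wellFounded.induction
    (C := fun c => ∀ A : GL (Fin 2) R, (A : Matrix (Fin 2) (Fin 2) R) 1 0 = c →
      (A : Matrix (Fin 2) (Fin 2) R).det = 1 → A ∈ Subgroup.closure (ES R)) c ?_
  intro c IH A hc hdet
  set a := (A : Matrix (Fin 2) (Fin 2) R) 0 0 with ha
  set b := (A : Matrix (Fin 2) (Fin 2) R) 0 1 with hb
  set d := (A : Matrix (Fin 2) (Fin 2) R) 1 1 with hd
  have hA : (A : Matrix (Fin 2) (Fin 2) R) = !![a, b; c, d] := by
    rw [← hc]; exact Matrix.eta_fin_two _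
  have hdet' : a * d - b * c = 1 := by
    rw [hA, Matrix.det_fin_two_of] at hdet; linear_combination hdet
  by_cases h0 : c = 0
  · have had : a * d = 1 := by rw [h0] at hdet'; linear_combination hdet'
    have hAeq : A = Dg a d * T01 (d * b) := by
      apply Units.ext
      rw [hA, Units.val_mul, Dg_val a d had]
      simp only [T01, Matrix.mul_fin_two]
      ext i j
      fin_cases i <;> fin_cases j <;>
        simp only [Fin.mk_zero, Fin.mk_one, Matrix.of_apply, Matrix.cons_val', Matrix.cons_val_zero, Matrix.cons_val_one, Matrix.head_cons,
          Matrix.empty_val', Matrix.cons_val_fin_one, Matrix.head_fin_const, h0] <;>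
        first
          | ring1
          | linear_combination had | linear_combination -had
          | linear_combination (b : R) * had | linear_combination (-b : R) * had
    rw [hAeq]
    exact mul_mem (Dg_mem a d) (T01_mem _)
  · set q := a / c with hq
    set B := W R * T01 (-q) * A with hBdef
    have hBval : (B : Matrix (Fin 2) (Fin 2) R) = !![-c, -d; a - q * c, b - q * d] := by
      rw [hBdef, Units.val_mul, Units.val_mul, W_val, hA]
      simp only [T01, Matrix.mul_fin_two]
      ext i j
      fin_cases i <;> fin_cases j <;> simp <;> ring
    have hBc : (B : Matrix (Fin 2) (Fin 2) R) 1 0 = a % c := by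
      rw [hBval]
      have h := EuclideanDomain.div_add_mod a c
      show a - q * c = a % c
      linear_combination -h
    have hBdet : (B : Matrix (Fin 2) (Fin 2) R).det = 1 := by
      rw [hBval, Matrix.det_fin_two_of]; linear_combination hdet'
    have hBmem : B ∈ Subgroup.closure (ES R) :=
      IH (a % c) (EuclideanDomain.mod_lt a h0) B hBc hBdet
    have hAeq : A = (T01 (-q))⁻¹ * (W R)⁻¹ * B := by
      rw [hBdef]; group
    rw [hAeq]
    exact mul_mem (mul_mem (inv_mem (T01_mem _)) (inv_mem W_mem)) hBmem

def DU (u : Rˣ) : GL (Fin 2) R :=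
  ⟨!![(u : R), 0; 0, 1], !![((u⁻¹ : Rˣ) : R), 0; 0, 1],
    by simp [Matrix.mul_fin_two, Matrix.one_fin_two],
    by simp [Matrix.mul_fin_two, Matrix.one_fin_two]⟩

def DL (u : Rˣ) : GL (Fin 2) R :=
  ⟨!![1, 0; 0, (u : R)], !![1, 0; 0, ((u⁻¹ : Rˣ) : R)],
    by simp [Matrix.mul_fin_two, Matrix.one_fin_two],
    by simp [Matrix.mul_fin_two, Matrix.one_fin_two]⟩

end CommGL2Aux

open CommGL2Aux in
/-- If `R` is a Euclidean domain containing units `u, v` with `u + v = 1`,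
then the commutator subgroup of `GL₂(R)` equals `E₂(R)`, the subgroup generated by the
`2 × 2` elementary matrices (transvections). -/
theorem commutator_GL2_eq_elementary (R : Type*) [EuclideanDomain R]
    (hu : ∃ u v : Rˣ, (u : R) + (v : R) = 1) :
    commutator (GL (Fin 2) R) = Subgroup.closure
      {A : GL (Fin 2) R | ∃ (i j : Fin 2) (_ : i ≠ j) (r : R),
        (A : Matrix (Fin 2) (Fin 2) R) = Matrix.transvection i j r} := by
  show commutator (GL (Fin 2) R) = Subgroup.closure (ES R)
  apply le_antisymm
  · rw [commutator_def]
    rw [Subgroup.commutator_le]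
    intro g _ h _
    refine det_one_mem _ (@Bracket.bracket _ _ commutatorElement g h) rfl ?_
    have : ((Units.map (Matrix.detMonoidHom : Matrix (Fin 2) (Fin 2) R →* R)) (@Bracket.bracket _ _ commutatorElement g h) : Rˣ)
        = 1 := by
      rw [map_commutatorElement]
      exact commutatorElement_eq_one_iff_mul_comm.mpr (mul_comm _ _)
    have h2 := congrArg (Units.val) this
    exact h2
  · rw [Subgroup.closure_le]
    rintro A ⟨i, j, hij, r, hval⟩
    obtain ⟨u, v, huv⟩ := hu
    rw [commutator_def]
    have hv1 : ((u : R) - 1) * (-((v⁻¹ : Rˣ) : R)) = (v : R) * ((v⁻¹ : Rˣ) : R) := by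
      linear_combination (-((v⁻¹ : Rˣ) : R)) * huv
    fin_cases i <;> fin_cases j
    · exact absurd rfl hij
    · -- i = 0, j = 1
      have hval' : (A : Matrix (Fin 2) (Fin 2) R) = !![1, r; 0, 1] := by
        rw [hval]; exact transvection01 r
      have huu : (u : R) * ((u⁻¹ : Rˣ) : R) = 1 := Units.mul_inv u
      have hvv : (v : R) * ((v⁻¹ : Rˣ) : R) = 1 := Units.mul_inv v
      have hAeq : A = @Bracket.bracket _ _ commutatorElement (DU u) (T01 (-((v⁻¹ : Rˣ) : R) * r)) := by
        apply Units.ext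
        rw [commutatorElement_def]
        simp only [Units.val_mul, DU, T01, Units.inv_mk, Matrix.mul_fin_two, hval']
        ext i j
        fin_cases i <;> fin_cases j <;>
          simp only [Fin.mk_zero, Fin.mk_one, Matrix.of_apply, Matrix.cons_val', Matrix.cons_val_zero, Matrix.cons_val_one,
            Matrix.head_cons, Matrix.empty_val', Matrix.cons_val_fin_one,
            Matrix.head_fin_const] <;>
          first
            | ring1
            | linear_combination huu | linear_combination -huu
            | linear_combination ((((v⁻¹ : Rˣ) : R)) * r) * huu + r * hvv
                - ((((v⁻¹ : Rˣ) : R)) * r) * huv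
            | linear_combination -(((((v⁻¹ : Rˣ) : R)) * r) * huu + r * hvv
                - ((((v⁻¹ : Rˣ) : R)) * r) * huv)
      rw [hAeq]
      exact Subgroup.commutator_mem_commutator (Subgroup.mem_top _) (Subgroup.mem_top _)
    · -- i = 1, j = 0
      have hval' : (A : Matrix (Fin 2) (Fin 2) R) = !![1, 0; r, 1] := by
        rw [hval]; exact transvection10 r
      have huu : (u : R) * ((u⁻¹ : Rˣ) : R) = 1 := Units.mul_inv u
      have hvv : (v : R) * ((v⁻¹ : Rˣ) : R) = 1 := Units.mul_inv v
      have hAeq : A = @Bracket.bracket _ _ commutatorElement (DL u) (T10 (-((v⁻¹ : Rˣ) : R) * r)) := by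
        apply Units.ext
        rw [commutatorElement_def]
        simp only [Units.val_mul, DL, T10, Units.inv_mk, Matrix.mul_fin_two, hval']
        ext i j
        fin_cases i <;> fin_cases j <;>
          simp only [Fin.mk_zero, Fin.mk_one, Matrix.of_apply, Matrix.cons_val', Matrix.cons_val_zero, Matrix.cons_val_one,
            Matrix.head_cons, Matrix.empty_val', Matrix.cons_val_fin_one,
            Matrix.head_fin_const] <;>
          first
            | ring1
            | linear_combination huu | linear_combination -huu
            | linear_combination ((((v⁻¹ : Rˣ) : R)) * r) * huu + r * hvv
                - ((((v⁻¹ : Rˣ) : R)) * r) * huv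
            | linear_combination -(((((v⁻¹ : Rˣ) : R)) * r) * huu + r * hvv
                - ((((v⁻¹ : Rˣ) : R)) * r) * huv)
      rw [hAeq]
      exact Subgroup.commutator_mem_commutator (Subgroup.mem_top _) (Subgroup.mem_top _)
    · exact absurd rfl hij
end

section
/- Let R be a Euclidean domain with units u, v satisfying u + v = 1. Then for every n ≥ 2, the abelianization of GL_n(R) is isomorphic to R^×, the group of units of R, with the isomorphism induced by the determinant. -/
/-!
Proof that the abelianization of `GL n R` over a Euclidean domain `R` possessing
units `u, v` with `u + v = 1` is isomorphic to `Rˣ` via the determinant.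
-/

open Matrix Sum

namespace Stmt17
open Matrix.TransvectionStruct Matrix.Pivot
open scoped Classical

variable {R : Type*} [EuclideanDomain R]

theorem det_transvec_prod {m : Type*} [DecidableEq m] [Fintype m]
    (L : List (TransvectionStruct m R)) : ((L.map toMatrix).prod).det = 1 := by
  induction L with
  | nil => simp
  | cons t L IH => simp [IH]

theorem tmul_apply {m : Type*} [DecidableEq m] [Fintype m] (i j a b : m) (c : R)
    (M : Matrix m m R) :
    (transvection i j c * M) a b = M a b + (if a = i then c * M j b else 0) := by
  rcases eq_or_ne a i with rfl | h
  · simp [transvection_mul_apply_same]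
  · simp [h, transvection_mul_apply_of_ne _ _ _ _ h]

theorem mul_t_apply {m : Type*} [DecidableEq m] [Fintype m] (i j a b : m) (c : R)
    (M : Matrix m m R) :
    (M * transvection i j c) a b = M a b + (if b = j then c * M a i else 0) := by
  rcases eq_or_ne b j with rfl | h
  · simp [mul_transvection_apply_same]
  · simp [h, mul_transvection_apply_of_ne _ _ _ _ h]

theorem exists_col_clear (r : ℕ) (b : R) :
    b ≠ 0 → ∀ (k : ℕ) (M : Matrix (Fin r ⊕ Unit) (Fin r ⊕ Unit) R),
      M (inr ()) (inr ()) = b →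
      (Finset.univ.filter fun i : Fin r => M (inl i) (inr ()) ≠ 0).card ≤ k →
      ∃ L : List (TransvectionStruct (Fin r ⊕ Unit) R),
        ∀ i : Fin r, ((L.map toMatrix).prod * M) (inl i) (inr ()) = 0 := by
  refine WellFounded.induction (C := fun b => b ≠ 0 → ∀ (k : ℕ)
      (M : Matrix (Fin r ⊕ Unit) (Fin r ⊕ Unit) R),
      M (inr ()) (inr ()) = b →
      (Finset.univ.filter fun i : Fin r => M (inl i) (inr ()) ≠ 0).card ≤ k →
      ∃ L : List (TransvectionStruct (Fin r ⊕ Unit) R),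
        ∀ i : Fin r, ((L.map toMatrix).prod * M) (inl i) (inr ()) = 0)
    EuclideanDomain.r_wellFounded b ?_
  clear b
  intro b IHb hb k
  induction k with
  | zero =>
    intro M hcorner hcard
    refine ⟨[], fun i => ?_⟩
    have hemp := Finset.card_eq_zero.mp (Nat.le_zero.mp hcard)
    have : M (inl i) (inr ()) = 0 := by
      by_contra h
      have : i ∈ Finset.univ.filter fun i : Fin r => M (inl i) (inr ()) ≠ 0 := by
        simp [h]
      simp [hemp] at this
    simpa using this
  | succ k IHk =>
    intro M hcorner hcard
    by_cases hz : ∀ i : Fin r, M (inl i) (inr ()) = 0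
    · exact ⟨[], fun i => by simpa using hz i⟩
    push_neg at hz
    obtain ⟨i, hi⟩ := hz
    set a := M (inl i) (inr ()) with ha
    set t : TransvectionStruct (Fin r ⊕ Unit) R := ⟨inl i, inr (), by simp, -(a / b)⟩ with ht
    set M' := t.toMatrix * M with hM'
    have happ : ∀ x y, M' x y = M x y + (if x = (inl i : Fin r ⊕ Unit) then -(a / b) * M (inr ()) y else 0) := by
      intro x y
      rw [hM', ht, toMatrix_mk, tmul_apply]
    have hM'corner : M' (inr ()) (inr ()) = b := by rw [happ]; simp [hcorner]
    have key : M' (inl i) (inr ()) = a % b := by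
      rw [happ]; simp [hcorner, ← ha]
      have h := EuclideanDomain.div_add_mod a b
      linear_combination -h
    have hrow : ∀ i' : Fin r, i' ≠ i → M' (inl i') (inr ()) = M (inl i') (inr ()) := by
      intro i' h
      rw [happ]; simp [h]
    by_cases hrem : a % b = 0
    · have hmem : i ∈ Finset.univ.filter fun i' : Fin r => M (inl i') (inr ()) ≠ 0 := by
        simp [← ha, hi]
      have hsub : (Finset.univ.filter fun i' : Fin r => M' (inl i') (inr ()) ≠ 0) ⊆
          (Finset.univ.filter fun i' : Fin r => M (inl i') (inr ()) ≠ 0).erase i := by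
        intro x hx
        simp only [Finset.mem_filter, Finset.mem_univ, true_and] at hx
        have hxi : x ≠ i := by
          rintro rfl
          rw [key, hrem] at hx
          exact hx rfl
        rw [Finset.mem_erase]
        refine ⟨hxi, by simp [← hrow x hxi, hx]⟩
      have hcard' : (Finset.univ.filter fun i' : Fin r => M' (inl i') (inr ()) ≠ 0).card ≤ k := by
        have h1 := Finset.card_le_card hsub
        have h2 := Finset.card_erase_of_mem hmem
        omega
      obtain ⟨L, hL⟩ := IHk M' hM'corner hcard'
      refine ⟨L ++ [t], fun i' => ?_⟩
      have : ((L ++ [t]).map toMatrix).prod * M = (L.map toMatrix).prod * M' := by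
        rw [List.map_append, List.prod_append]
        simp [Matrix.mul_assoc, hM']
      rw [this]; exact hL i'
    · -- swap rows i and last, recurse on a % b
      set s1 : TransvectionStruct (Fin r ⊕ Unit) R := ⟨inr (), inl i, by simp, 1⟩ with hs1
      set s2 : TransvectionStruct (Fin r ⊕ Unit) R := ⟨inl i, inr (), by simp, -1⟩ with hs2
      set M'' := s1.toMatrix * (s2.toMatrix * (s1.toMatrix * M')) with hM''
      have h1app : ∀ x y, (s1.toMatrix * M') x y
          = M' x y + (if x = (inr () : Fin r ⊕ Unit) then M' (inl i) y else 0) := by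
        intro x y; rw [hs1, toMatrix_mk, tmul_apply]; simp
      have h2app : ∀ x y, (s2.toMatrix * (s1.toMatrix * M')) x y
          = (s1.toMatrix * M') x y
            + (if x = (inl i : Fin r ⊕ Unit) then -(s1.toMatrix * M') (inr ()) y else 0) := by
        intro x y; rw [hs2, toMatrix_mk, tmul_apply]; simp
      have h3app : ∀ x y, M'' x y = (s2.toMatrix * (s1.toMatrix * M')) x y
          + (if x = (inr () : Fin r ⊕ Unit) then (s2.toMatrix * (s1.toMatrix * M')) (inl i) y else 0) := by
        intro x y; rw [hM'', hs1, toMatrix_mk, tmul_apply]; simp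
      have hcorner'' : M'' (inr ()) (inr ()) = a % b := by
        rw [h3app, h2app, h2app, h1app, h1app]
        simp [hM'corner, key]
      have hrow'' : ∀ i' : Fin r, i' ≠ i → M'' (inl i') (inr ()) = M (inl i') (inr ()) := by
        intro i' h
        rw [h3app, h2app, h1app]
        simp [Sum.inl.injEq, h, hrow i' h]
      obtain ⟨L, hL⟩ := IHb (a % b) (EuclideanDomain.remainder_lt a hb) hrem
        (Finset.univ.filter fun i' : Fin r => M'' (inl i') (inr ()) ≠ 0).card M'' hcorner'' le_rfl
      refine ⟨L ++ [s1, s2, s1, t], fun i' => ?_⟩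
      have : ((L ++ [s1, s2, s1, t]).map toMatrix).prod * M = (L.map toMatrix).prod * M'' := by
        rw [List.map_append, List.prod_append]
        simp [Matrix.mul_assoc, hM'', hM']
      rw [this]; exact hL i'


theorem exists_row_clear (r : ℕ) (l : List (Fin r)) :
    ∀ (M : Matrix (Fin r ⊕ Unit) (Fin r ⊕ Unit) R) (u : Rˣ),
      M (inr ()) (inr ()) = u → (∀ i : Fin r, M (inl i) (inr ()) = 0) →
      ∃ L : List (TransvectionStruct (Fin r ⊕ Unit) R),
        (∀ (i : Fin r) (j), (M * (L.map toMatrix).prod) (inl i) j = M (inl i) j) ∧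
        ((M * (L.map toMatrix).prod) (inr ()) (inr ()) = M (inr ()) (inr ())) ∧
        (∀ c : Fin r, c ∉ l → (M * (L.map toMatrix).prod) (inr ()) (inl c) = M (inr ()) (inl c)) ∧
        (∀ c ∈ l, (M * (L.map toMatrix).prod) (inr ()) (inl c) = 0) := by
  induction l with
  | nil => intro M u hu h0; exact ⟨[], by simp⟩
  | cons j l IH =>
    intro M u hcorner h0
    set t : TransvectionStruct (Fin r ⊕ Unit) R :=
      ⟨inr (), inl j, by simp, -((u⁻¹ : Rˣ) * M (inr ()) (inl j))⟩ with ht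
    set M' := M * t.toMatrix with hM'
    have happ : ∀ x y, M' x y = M x y +
        (if y = (inl j : Fin r ⊕ Unit) then -((u⁻¹ : Rˣ) * M (inr ()) (inl j)) * M x (inr ()) else 0) := by
      intro x y; rw [hM', ht, toMatrix_mk, mul_t_apply]
    have h1 : ∀ (i : Fin r) (jj), M' (inl i) jj = M (inl i) jj := by
      intro i jj; rw [happ]; simp [h0 i]
    have h2 : M' (inr ()) (inr ()) = M (inr ()) (inr ()) := by
      rw [happ]; simp
    have h3 : M' (inr ()) (inl j) = 0 := by
      rw [happ]; simp [hcorner]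
      have hh : ((u⁻¹ : Rˣ) : R) * (u : R) = 1 := Units.inv_mul u
      linear_combination -M (inr ()) (inl j) * hh
    have h4 : ∀ c : Fin r, c ≠ j → M' (inr ()) (inl c) = M (inr ()) (inl c) := by
      intro c hc; rw [happ]; simp [hc]
    obtain ⟨L, hL1, hL2, hL3, hL4⟩ := IH M' u (by rw [h2, hcorner]) (fun i => by rw [h1]; exact h0 i)
    have hprod : M * ((t :: L).map toMatrix).prod = M' * (L.map toMatrix).prod := by
      rw [List.map_cons, List.prod_cons, ← Matrix.mul_assoc, hM']
    refine ⟨t :: L, ?_, ?_, ?_, ?_⟩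
    · intro i jj; rw [hprod, hL1, h1]
    · rw [hprod, hL2, h2]
    · intro c hc
      have hcj : c ≠ j := fun h => hc (h ▸ List.mem_cons_self)
      have hcl : c ∉ l := fun h => hc (List.mem_cons_of_mem _ h)
      rw [hprod, hL3 c hcl, h4 c hcj]
    · intro c hc
      rcases List.mem_cons.mp hc with rfl | hcl
      · by_cases hcl' : c ∈ l
        · rw [hprod]; exact hL4 c hcl'
        · rw [hprod, hL3 c hcl', h3]
      · rw [hprod]; exact hL4 c hcl


/-- Step A: clear the last column (entries above the corner). -/
theorem exists_col_clear_full (r : ℕ) (M : Matrix (Fin r ⊕ Unit) (Fin r ⊕ Unit) R) :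
    ∃ L : List (TransvectionStruct (Fin r ⊕ Unit) R),
      ∀ i : Fin r, ((L.map toMatrix).prod * M) (inl i) (inr ()) = 0 := by
  by_cases hz : ∀ i : Fin r, M (inl i) (inr ()) = 0
  · exact ⟨[], fun i => by simpa using hz i⟩
  push_neg at hz
  obtain ⟨i, hi⟩ := hz
  by_cases hb : M (inr ()) (inr ()) ≠ 0
  · obtain ⟨L, hL⟩ := exists_col_clear r (M (inr ()) (inr ())) hb
      (Finset.univ.filter fun i' : Fin r => M (inl i') (inr ()) ≠ 0).card M rfl le_rfl
    exact ⟨L, hL⟩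
  · push_neg at hb
    set t : TransvectionStruct (Fin r ⊕ Unit) R := ⟨inr (), inl i, by simp, 1⟩ with ht
    set M' := t.toMatrix * M with hM'
    have happ : ∀ x y, M' x y = M x y + (if x = (inr () : Fin r ⊕ Unit) then M (inl i) y else 0) := by
      intro x y; rw [hM', ht, toMatrix_mk, tmul_apply]; simp
    have hcorner : M' (inr ()) (inr ()) = M (inl i) (inr ()) := by rw [happ]; simp [hb]
    obtain ⟨L, hL⟩ := exists_col_clear r (M' (inr ()) (inr ())) (by rw [hcorner]; exact hi)
      (Finset.univ.filter fun i' : Fin r => M' (inl i') (inr ()) ≠ 0).card M' rfl le_rfl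
    refine ⟨L ++ [t], fun i' => ?_⟩
    have : ((L ++ [t]).map toMatrix).prod * M = (L.map toMatrix).prod * M' := by
      rw [List.map_append, List.prod_append]
      simp [Matrix.mul_assoc, hM']
    rw [this]; exact hL i'

/-- Step B: make `M` two-block diagonal, preserving invertibility. -/
theorem exists_block (r : ℕ) (M : Matrix (Fin r ⊕ Unit) (Fin r ⊕ Unit) R)
    (hM : IsUnit M.det) :
    ∃ L L' : List (TransvectionStruct (Fin r ⊕ Unit) R),
      (∀ i : Fin r, ((L.map toMatrix).prod * M * (L'.map toMatrix).prod) (inl i) (inr ()) = 0) ∧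
      (∀ j : Fin r, ((L.map toMatrix).prod * M * (L'.map toMatrix).prod) (inr ()) (inl j) = 0) := by
  obtain ⟨L, hL⟩ := exists_col_clear_full r M
  set N := (L.map toMatrix).prod * M with hN
  have hdetN : IsUnit N.det := by
    rw [hN, det_mul, det_transvec_prod, one_mul]; exact hM
  have h12 : toBlocks₁₂ N = 0 := by
    ext i ⟨⟩; exact hL i
  have hblocks : N = fromBlocks (toBlocks₁₁ N) 0 (toBlocks₂₁ N) (toBlocks₂₂ N) := by
    conv_lhs => rw [← fromBlocks_toBlocks N]
    rw [h12]
  have hdet22 : IsUnit (N (inr ()) (inr ())) := by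
    rw [hblocks, det_fromBlocks_zero₁₂] at hdetN
    have := isUnit_of_mul_isUnit_right hdetN
    rwa [det_unique] at this
  obtain ⟨L', hL'1, hL'2, _, hL'4⟩ := exists_row_clear r (List.finRange r) N hdet22.unit
    (hdet22.unit_spec.symm) (fun i => hL i)
  have hassoc : (L.map toMatrix).prod * M * (L'.map toMatrix).prod
      = N * (L'.map toMatrix).prod := by rw [hN]
  refine ⟨L, L', fun i => ?_, fun j => ?_⟩
  · rw [hassoc, hL'1]; exact hL i
  · rw [hassoc]; exact hL'4 j (List.mem_finRange j)


/-- Inductive step, following Mathlib's field version. -/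
theorem induction_step (r : ℕ)
    (IH : ∀ M : Matrix (Fin r) (Fin r) R, IsUnit M.det →
      ∃ (L₀ L₀' : List (TransvectionStruct (Fin r) R)) (D₀ : Fin r → R),
        (L₀.map toMatrix).prod * M * (L₀'.map toMatrix).prod = diagonal D₀)
    (M : Matrix (Fin r ⊕ Unit) (Fin r ⊕ Unit) R) (hM : IsUnit M.det) :
    ∃ (L L' : List (TransvectionStruct (Fin r ⊕ Unit) R)) (D : Fin r ⊕ Unit → R),
      (L.map toMatrix).prod * M * (L'.map toMatrix).prod = diagonal D := by
  obtain ⟨L₁, L₁', h1, h2⟩ := exists_block r M hM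
  set M' := (L₁.map toMatrix).prod * M * (L₁'.map toMatrix).prod with hM'def
  have hM' : IsUnit M'.det := by
    rw [hM'def, det_mul, det_mul, det_transvec_prod, det_transvec_prod, one_mul, mul_one]
    exact hM
  set c := M' (inr ()) (inr ()) with hc
  have e12 : toBlocks₁₂ M' = 0 := by ext i ⟨⟩; exact h1 i
  have e21 : toBlocks₂₁ M' = 0 := by ext ⟨⟩ j; exact h2 j
  have e22 : toBlocks₂₂ M' = diagonal fun _ => c := by
    ext ⟨⟩ ⟨⟩; simp [toBlocks₂₂, diagonal, hc]
  have hb : M' = fromBlocks (toBlocks₁₁ M') 0 0 (diagonal fun _ => c) := by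
    conv_lhs => rw [← fromBlocks_toBlocks M']
    rw [e12, e21, e22]
  have hdet11 : IsUnit (toBlocks₁₁ M').det := by
    rw [hb, det_fromBlocks_zero₁₂] at hM'
    exact isUnit_of_mul_isUnit_left hM'
  obtain ⟨L₀, L₀', D₀, h₀⟩ := IH (toBlocks₁₁ M') hdet11
  refine ⟨L₀.map (sumInl Unit) ++ L₁, L₁' ++ L₀'.map (sumInl Unit),
    Sum.elim D₀ fun _ => c, ?_⟩
  suffices (L₀.map (toMatrix ∘ sumInl Unit)).prod * M' * (L₀'.map (toMatrix ∘ sumInl Unit)).prod =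
      diagonal (Sum.elim D₀ fun _ => c) by
    simpa [hM'def, Matrix.mul_assoc]
  rw [hb]
  simp [h₀]

theorem reindex_diag {p q : Type*} [Fintype p] [DecidableEq p] [Fintype q] [DecidableEq q]
    (M : Matrix p p R) (e : p ≃ q)
    (H : ∃ (L L' : List (TransvectionStruct q R)) (D : q → R),
        (L.map toMatrix).prod * Matrix.reindexAlgEquiv R _ e M * (L'.map toMatrix).prod =
          diagonal D) :
    ∃ (L L' : List (TransvectionStruct p R)) (D : p → R),
      (L.map toMatrix).prod * M * (L'.map toMatrix).prod = diagonal D := by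
  rcases H with ⟨L₀, L₀', D₀, h₀⟩
  refine ⟨L₀.map (reindexEquiv e.symm), L₀'.map (reindexEquiv e.symm), D₀ ∘ e, ?_⟩
  have : M = reindexAlgEquiv R _ e.symm (reindexAlgEquiv R _ e M) := by
    simp only [Equiv.symm_symm, submatrix_submatrix, reindex_apply, submatrix_id_id,
      Equiv.symm_comp_self, reindexAlgEquiv_apply]
  rw [this]
  simp only [toMatrix_reindexEquiv_prod, List.map_map, reindexAlgEquiv_apply]
  simp only [← reindexAlgEquiv_apply R, ← reindexAlgEquiv_mul, h₀]
  simp only [Equiv.symm_symm, reindex_apply, submatrix_diagonal_equiv, reindexAlgEquiv_apply]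

theorem exists_diag : ∀ (r : ℕ) (M : Matrix (Fin r) (Fin r) R), IsUnit M.det →
    ∃ (L L' : List (TransvectionStruct (Fin r) R)) (D : Fin r → R),
      (L.map toMatrix).prod * M * (L'.map toMatrix).prod = diagonal D := by
  intro r
  induction r with
  | zero =>
    intro M _
    exact ⟨[], [], fun _ => 1, by ext i j; exact i.elim0⟩
  | succ r IHr =>
    intro M hM
    have e : Fin (r + 1) ≃ Fin r ⊕ Unit := Fintype.equivOfCardEq (by simp)
    apply reindex_diag M e
    apply induction_step r (fun N hN => IHr N hN)
    rw [reindexAlgEquiv_apply, reindex_apply, det_submatrix_equiv_self]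
    exact hM


section Units

variable {m : Type*} [Fintype m] [DecidableEq m]

/-- Diagonal matrix of units as element of `GL`. -/
def dUnit (d : m → Rˣ) : GL m R :=
  ⟨diagonal fun i => (d i : R), diagonal fun i => (((d i)⁻¹ : Rˣ) : R),
    by rw [diagonal_mul_diagonal]; simp,
    by rw [diagonal_mul_diagonal]; simp⟩

@[simp] theorem dUnit_val (d : m → Rˣ) :
    (dUnit d : GL m R).val = diagonal fun i => (d i : R) :=
  rfl

@[simp] theorem dUnit_inv_val (d : m → Rˣ) :
    ((dUnit d)⁻¹ : GL m R).val = diagonal fun i => (((d i)⁻¹ : Rˣ) : R) :=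
  rfl

/-- `dUnit` as a monoid hom. -/
def dHom : (m → Rˣ) →* GL m R where
  toFun := dUnit
  map_one' := by
    apply Units.ext
    simp [dUnit]
  map_mul' d d' := by
    apply Units.ext
    simp [dUnit, diagonal_mul_diagonal]

/-- Permutation matrix as element of `GL`. -/
def pUnit (σ : Equiv.Perm m) : GL m R :=
  ⟨σ.toPEquiv.toMatrix, σ.symm.toPEquiv.toMatrix,
    by rw [← PEquiv.toMatrix_trans, ← Equiv.toPEquiv_trans, Equiv.self_trans_symm,
      Equiv.toPEquiv_refl, PEquiv.toMatrix_refl],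
    by rw [← PEquiv.toMatrix_trans, ← Equiv.toPEquiv_trans, Equiv.symm_trans_self,
      Equiv.toPEquiv_refl, PEquiv.toMatrix_refl]⟩

@[simp] theorem pUnit_val (σ : Equiv.Perm m) :
    (pUnit σ : GL m R).val = σ.toPEquiv.toMatrix := rfl

@[simp] theorem pUnit_inv_val (σ : Equiv.Perm m) :
    ((pUnit σ)⁻¹ : GL m R).val = σ.symm.toPEquiv.toMatrix := rfl

theorem pUnit_conj_dUnit (σ : Equiv.Perm m) (d : m → Rˣ) :
    (pUnit σ : GL m R) * dUnit d * (pUnit σ)⁻¹ = dUnit (d ∘ σ) := by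
  apply Units.ext
  rw [Units.val_mul, Units.val_mul, pUnit_inv_val, pUnit_val, dUnit_val, dUnit_val]
  rw [Matrix.mul_assoc, PEquiv.mul_toMatrix_toPEquiv, Equiv.symm_symm,
    PEquiv.toMatrix_toPEquiv_mul, submatrix_submatrix]
  simp only [Function.comp_id, Function.id_comp]
  rw [submatrix_diagonal_equiv]
  rfl

/-- Transvection as element of `GL`. -/
def tUnit (t : TransvectionStruct m R) : GL m R :=
  ⟨t.toMatrix, t.inv.toMatrix, t.mul_inv, t.inv_mul⟩

@[simp] theorem tUnit_val (t : TransvectionStruct m R) :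
    (tUnit t : GL m R).val = t.toMatrix := rfl

theorem diag_conj_transvection (d : m → Rˣ) (i j : m) (hij : i ≠ j) (c : R) :
    (dUnit d : GL m R).val * transvection i j c * ((dUnit d)⁻¹ : GL m R).val =
      transvection i j ((d i : R) * c * (((d j)⁻¹ : Rˣ) : R)) := by
  rw [dUnit_val, dUnit_inv_val]
  have key : diagonal (fun i => (d i : R)) * Matrix.single i j c *
      diagonal (fun i => (((d i)⁻¹ : Rˣ) : R)) = Matrix.single i j ((d i : R) * c * (((d j)⁻¹ : Rˣ) : R)) := by
    ext a b
    simp only [mul_diagonal, diagonal_mul, Matrix.single, of_apply]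
    by_cases ha : i = a <;> by_cases hb : j = b <;> simp [ha, hb] <;> ring
  rw [transvection, Matrix.mul_add, Matrix.add_mul, Matrix.mul_one, diagonal_mul_diagonal, key]
  have : (fun i => (d i : R) * (((d i)⁻¹ : Rˣ) : R)) = fun _ => (1 : R) := by
    funext i; simp
  rw [this, diagonal_one, transvection]

theorem of_tUnit (hu : ∃ u v : Rˣ, (u : R) + (v : R) = 1) (t : TransvectionStruct m R) :
    Abelianization.of (tUnit t : GL m R) = 1 := by
  obtain ⟨u, v, huv⟩ := hu
  set c' : R := -(((v⁻¹ : Rˣ) : R) * t.c) with hc'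
  set d : m → Rˣ := Pi.mulSingle t.i u with hd
  set T' : GL m R := tUnit ⟨t.i, t.j, t.hij, c'⟩ with hT'
  have hconj : tUnit t = dUnit d * T' * (dUnit d)⁻¹ * T'⁻¹ := by
    apply Units.ext
    rw [Units.val_mul, Units.val_mul, Units.val_mul]
    have hlhs : (tUnit t : GL m R).val = transvection t.i t.j t.c := rfl
    have hinv : (T'⁻¹ : GL m R).val = transvection t.i t.j (-c') := rfl
    have hval : (T' : GL m R).val = transvection t.i t.j c' := rfl
    rw [hlhs, hinv, hval, diag_conj_transvection d t.i t.j t.hij c']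
    have hdi : d t.i = u := by rw [hd]; simp
    have hdj : (((d t.j)⁻¹ : Rˣ) : R) = (1 : R) := by
      rw [hd, Pi.mulSingle_apply, if_neg (Ne.symm t.hij)]; simp
    rw [hdi, hdj, mul_one, transvection_mul_transvection_same _ _ t.hij]

    have hvv : (v : R) * ((v⁻¹ : Rˣ) : R) = 1 := by
      rw [← Units.val_mul]; simp
    have harg : (u : R) * c' + -c' = t.c := by
      rw [hc']; linear_combination (-(((v⁻¹ : Rˣ) : R) * t.c)) * huv + t.c * hvv
    rw [harg]
  rw [hconj]
  open scoped commutatorElement in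
  have : dUnit d * T' * (dUnit d)⁻¹ * T'⁻¹ = ⁅dUnit d, T'⁆ := rfl
  rw [this, map_commutatorElement]
  exact commutatorElement_eq_one_iff_commute.mpr (Commute.all _ _)

theorem tUnit_prod_val (L : List (TransvectionStruct m R)) :
    (((L.map tUnit).prod : GL m R)).val = (L.map toMatrix).prod := by
  induction L with
  | nil => simp
  | cons t L IH => simp [IH]

theorem of_tUnit_prod (hu : ∃ u v : Rˣ, (u : R) + (v : R) = 1)
    (L : List (TransvectionStruct m R)) :
    Abelianization.of ((L.map tUnit).prod : GL m R) = 1 := by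
  induction L with
  | nil => simp
  | cons t L IH => rw [List.map_cons, List.prod_cons, _root_.map_mul, IH, of_tUnit hu, one_mul]

theorem of_dUnit_single (i₀ i : m) (a : Rˣ) :
    Abelianization.of (dUnit (Pi.mulSingle i a) : GL m R)
      = Abelianization.of (dUnit (Pi.mulSingle i₀ a)) := by
  have hconj : (pUnit (Equiv.swap i i₀) : GL m R) * dUnit (Pi.mulSingle i a) *
      (pUnit (Equiv.swap i i₀))⁻¹ = dUnit (Pi.mulSingle i₀ a) := by
    rw [pUnit_conj_dUnit]
    congr 1
    funext k
    simp only [Function.comp_apply]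
    rcases eq_or_ne k i₀ with rfl | hk
    · rw [Equiv.swap_apply_right, Pi.mulSingle_eq_same, Pi.mulSingle_eq_same]
    · rcases eq_or_ne k i with hk' | hk'
      · have hii : i ≠ i₀ := hk' ▸ hk
        rw [hk', Equiv.swap_apply_left, Pi.mulSingle_eq_of_ne (Ne.symm hii),
          Pi.mulSingle_eq_of_ne hii]
      · rw [Equiv.swap_apply_of_ne_of_ne hk' hk, Pi.mulSingle_eq_of_ne hk',
          Pi.mulSingle_eq_of_ne hk]
  rw [← hconj, _root_.map_mul, _root_.map_mul, map_inv]
  rw [mul_comm (Abelianization.of (pUnit (Equiv.swap i i₀)))]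
  rw [mul_assoc, mul_inv_cancel, mul_one]

theorem of_dUnit (i₀ : m) (d : m → Rˣ) :
    Abelianization.of (dUnit d : GL m R)
      = Abelianization.of (dUnit (Pi.mulSingle i₀ (∏ i, d i))) := by
  set F : (m → Rˣ) →* Abelianization (GL m R) :=
    (Abelianization.of (G := GL m R)).comp dHom with hF
  have hFd : ∀ d' : m → Rˣ, Abelianization.of (dUnit d' : GL m R) = F d' := fun _ => rfl
  rw [hFd, hFd]
  conv_lhs => rw [← Finset.univ_prod_mulSingle d]
  rw [map_prod]
  have h2 : ∀ i, F (Pi.mulSingle i (d i)) = F (Pi.mulSingle i₀ (d i)) := by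
    intro i
    rw [← hFd, ← hFd]
    exact of_dUnit_single i₀ i (d i)
  rw [Finset.prod_congr rfl fun i _ => h2 i]
  set G : Rˣ →* Abelianization (GL m R) :=
    F.comp (MonoidHom.mulSingle (fun _ : m => Rˣ) i₀) with hG
  have h3 : ∀ x : Rˣ, F (Pi.mulSingle i₀ x) = G x := fun _ => rfl
  rw [Finset.prod_congr rfl fun i _ => h3 (d i), ← map_prod, ← h3]

end Units

section Final

variable {n : ℕ}

/-- Any element of `GL` with determinant one is trivial in the abelianization. -/
theorem of_det_one (hu : ∃ u v : Rˣ, (u : R) + (v : R) = 1) (i₀ : Fin n) (B : GL (Fin n) R)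
    (h1 : (B : Matrix (Fin n) (Fin n) R).det = 1) : Abelianization.of B = 1 := by
  have hdet : IsUnit (B : Matrix (Fin n) (Fin n) R).det := by rw [h1]; exact isUnit_one
  obtain ⟨L, L', D, hLL⟩ := exists_diag n (B : Matrix (Fin n) (Fin n) R) hdet
  have hDprod : ∏ i, D i = 1 := by
    have := congrArg Matrix.det hLL
    rw [det_mul, det_mul, det_transvec_prod, det_transvec_prod, one_mul, mul_one, h1,
      det_diagonal] at this
    exact this.symm
  have hD : ∀ i, IsUnit (D i) := fun i =>
    isUnit_of_dvd_one (hDprod ▸ Finset.dvd_prod_of_mem D (Finset.mem_univ i))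
  set d : Fin n → Rˣ := fun i => (hD i).unit with hd
  have hunit : (L.map tUnit).prod * B * (L'.map tUnit).prod = (dUnit d : GL (Fin n) R) := by
    apply Units.ext
    rw [Units.val_mul, Units.val_mul, tUnit_prod_val, tUnit_prod_val, dUnit_val]
    rw [hLL]
    have : (fun i => ((d i : Rˣ) : R)) = D := funext fun i => (hD i).unit_spec
    rw [this]
  have hofB : Abelianization.of B = Abelianization.of (dUnit d : GL (Fin n) R) := by
    rw [← hunit, _root_.map_mul, _root_.map_mul, of_tUnit_prod hu, of_tUnit_prod hu,
      one_mul, mul_one]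
  rw [hofB, of_dUnit i₀ d]
  have hprod1 : (∏ i, d i) = 1 := by
    apply Units.ext
    rw [Units.val_one]
    calc ((∏ i, d i : Rˣ) : R) = ∏ i, ((d i : Rˣ) : R) :=
          map_prod (Units.coeHom R) d Finset.univ
      _ = ∏ i, D i := by refine Finset.prod_congr rfl fun i _ => (hD i).unit_spec
      _ = 1 := hDprod
  rw [hprod1, Pi.mulSingle_one]
  have : (dUnit (1 : Fin n → Rˣ) : GL (Fin n) R) = 1 := _root_.map_one (dHom (R := R) (m := Fin n))
  rw [this, _root_.map_one]

end Final

end Stmt17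

open Stmt17 in
/-- If `R` is a Euclidean domain with units `u, v` satisfying `u + v = 1`,
then for every `n ≥ 2` the abelianization of `GL_n(R)` is isomorphic to `R^×`, via the map
induced by the determinant. -/
theorem abelianization_GL_eq_units (R : Type*) [EuclideanDomain R]
    (hu : ∃ u v : Rˣ, (u : R) + (v : R) = 1) (n : ℕ) (hn : 2 ≤ n) :
    ∃ e : Abelianization (GL (Fin n) R) ≃* Rˣ,
      ∀ A : GL (Fin n) R,
        ((e (Abelianization.of A) : Rˣ) : R) = (A : Matrix (Fin n) (Fin n) R).det := by
  have hpos : 0 < n := by omega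
  set i₀ : Fin n := ⟨0, hpos⟩ with hi₀
  set detHom : GL (Fin n) R →* Rˣ := Matrix.GeneralLinearGroup.det with hdetHom
  set φ : Abelianization (GL (Fin n) R) →* Rˣ := Abelianization.lift detHom with hφ
  set ψ : Rˣ →* Abelianization (GL (Fin n) R) :=
    (Abelianization.of).comp ((dHom).comp (MonoidHom.mulSingle (fun _ : Fin n => Rˣ) i₀)) with hψ
  have hψapp : ∀ a : Rˣ, ψ a = Abelianization.of (dUnit (Pi.mulSingle i₀ a) : GL (Fin n) R) :=
    fun _ => rfl
  have hsingle : ∀ (a : Rˣ) (i : Fin n),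
      (((Pi.mulSingle i₀ a : Fin n → Rˣ) i : Rˣ) : R) = if i = i₀ then (a : R) else 1 := by
    intro a i
    rcases eq_or_ne i i₀ with rfl | h
    · simp [Pi.mulSingle_eq_same]
    · simp [Pi.mulSingle_eq_of_ne h, h]
  have hdetd : ∀ a : Rˣ, detHom (dUnit (Pi.mulSingle i₀ a) : GL (Fin n) R) = a := by
    intro a
    apply Units.ext
    rw [hdetHom, Matrix.GeneralLinearGroup.val_det_apply]
    show (dUnit (Pi.mulSingle i₀ a) : GL (Fin n) R).val.det = (a : R)
    rw [dUnit_val, det_diagonal, Finset.prod_congr rfl fun i _ => hsingle a i,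
      Finset.prod_ite_eq' Finset.univ i₀ (fun _ => (a : R)), if_pos (Finset.mem_univ i₀)]
  have hof : ∀ A : GL (Fin n) R, ψ (detHom A) = Abelianization.of A := by
    intro A
    set B : GL (Fin n) R := (dUnit (Pi.mulSingle i₀ (detHom A)))⁻¹ * A with hB
    have hsingleinv : ∀ i : Fin n,
        (((((Pi.mulSingle i₀ (detHom A) : Fin n → Rˣ) i)⁻¹ : Rˣ)) : R)
          = if i = i₀ then (((detHom A)⁻¹ : Rˣ) : R) else 1 := by
      intro i
      rcases eq_or_ne i i₀ with rfl | h
      · simp [Pi.mulSingle_eq_same]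
      · simp [Pi.mulSingle_eq_of_ne h, h]
    have hdetB : (B : Matrix (Fin n) (Fin n) R).det = 1 := by
      show (B.val).det = 1
      rw [hB, Units.val_mul, det_mul, dUnit_inv_val, det_diagonal,
        Finset.prod_congr rfl fun i _ => hsingleinv i,
        Finset.prod_ite_eq' Finset.univ i₀ (fun _ => (((detHom A)⁻¹ : Rˣ) : R)),
        if_pos (Finset.mem_univ i₀)]
      have hA : (A.val).det = ((detHom A : Rˣ) : R) := by
        rw [hdetHom, Matrix.GeneralLinearGroup.val_det_apply]
      rw [hA, ← Units.val_mul, inv_mul_cancel, Units.val_one]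
    have hofB : Abelianization.of B = 1 := of_det_one hu i₀ B hdetB
    have hA : A = (dUnit (Pi.mulSingle i₀ (detHom A)) : GL (Fin n) R) * B := by
      rw [hB, mul_inv_cancel_left]
    rw [hψapp]
    calc Abelianization.of (dUnit (Pi.mulSingle i₀ (detHom A)) : GL (Fin n) R)
        = Abelianization.of (dUnit (Pi.mulSingle i₀ (detHom A)) : GL (Fin n) R)
            * Abelianization.of B := by rw [hofB, mul_one]
      _ = Abelianization.of A := by rw [← _root_.map_mul, ← hA]
  have hleft : ψ.comp φ = MonoidHom.id _ := by
    apply Abelianization.hom_ext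
    apply MonoidHom.ext
    intro A
    simp only [MonoidHom.comp_apply]
    rw [hφ, Abelianization.lift_apply_of]
    exact hof A
  have hright : φ.comp ψ = MonoidHom.id _ := by
    apply MonoidHom.ext
    intro a
    simp only [MonoidHom.comp_apply, MonoidHom.id_apply]
    rw [hψapp, hφ, Abelianization.lift_apply_of]
    exact hdetd a
  refine ⟨MonoidHom.toMulEquiv φ ψ hleft hright, fun A => ?_⟩
  show ((φ (Abelianization.of A) : Rˣ) : R) = _
  rw [hφ, Abelianization.lift_apply_of, hdetHom, Matrix.GeneralLinearGroup.val_det_apply]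
end
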